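/- arXiv:math/0607043 — 3 statements merged into one kernel-verified Lean document; each statement's English description precedes it below -/
import Mathlib

section
/- (Dubuc) Let $G$ be a comonad on $\mathcal{A}$ and $L : \mathcal{B} \to \mathcal{A}$ a functor with right adjoint $R$. Then there is a bijective correspondence between functors $K : \mathcal{B} \to \mathcal{A}^G$ satisfying $U \circ K = L$ (where $U$ is the forgetful functor from $G$-coalgebras) and morphisms of comonads $\varphi : LR \to G$. -/
open CategoryTheory

namespace Stmt5Aux

variable {A B : Type*} [Category A] [Category B]
variable (G : Comonad A) {L : B ⥤ A} {R : A ⥤ B} (adj : L ⊣ R)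

lemma unit_sq (b : B) :
    adj.unit.app b ≫ adj.unit.app (R.obj (L.obj b)) =
      adj.unit.app b ≫ R.map (L.map (adj.unit.app b)) := by
  simpa using adj.unit.naturality (adj.unit.app b)

lemma unit_nat {b b' : B} (f : b ⟶ b') :
    adj.unit.app b ≫ R.map (L.map f) = f ≫ adj.unit.app b' := by
  simpa using (adj.unit.naturality f).symm

/-- From a comonad morphism, a lift of `L` to coalgebras. -/
@[simps] def mkK (φ : adj.toComonad ⟶ G) : B ⥤ G.Coalgebra where
  obj b :=
    { A := L.obj b
      a := L.map (adj.unit.app b) ≫ φ.app (L.obj b)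
      counit := by
        erw [Category.assoc, φ.app_ε]
        simp
      coassoc := by
        have n := φ.1.naturality (L.map (adj.unit.app b))
        have hδ := φ.app_δ (L.obj b)
        dsimp at n hδ
        calc (L.map (adj.unit.app b) ≫ φ.app (L.obj b)) ≫ G.δ.app (L.obj b)
            = L.map (adj.unit.app b) ≫ (φ.app (L.obj b) ≫ G.δ.app (L.obj b)) :=
              Category.assoc _ _ _
          _ = L.map (adj.unit.app b) ≫ (L.map (adj.unit.app (R.obj (L.obj b))) ≫
                φ.app (L.obj (R.obj (L.obj b))) ≫ G.map (φ.app (L.obj b))) :=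
              whisker_eq _ hδ
          _ = (L.map (adj.unit.app b) ≫ L.map (adj.unit.app (R.obj (L.obj b)))) ≫
                φ.app (L.obj (R.obj (L.obj b))) ≫ G.map (φ.app (L.obj b)) :=
              (Category.assoc _ _ _).symm
          _ = (L.map (adj.unit.app b) ≫ L.map (R.map (L.map (adj.unit.app b)))) ≫
                φ.app (L.obj (R.obj (L.obj b))) ≫ G.map (φ.app (L.obj b)) := by
              rw [← L.map_comp, ← L.map_comp, unit_sq]
          _ = L.map (adj.unit.app b) ≫ (L.map (R.map (L.map (adj.unit.app b))) ≫
                φ.app (L.obj (R.obj (L.obj b)))) ≫ G.map (φ.app (L.obj b)) :=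
              (Category.assoc _ _ _).trans (whisker_eq _ (Category.assoc _ _ _).symm)
          _ = L.map (adj.unit.app b) ≫ (φ.app (L.obj b) ≫ G.map (L.map (adj.unit.app b))) ≫
                G.map (φ.app (L.obj b)) :=
              whisker_eq _ (eq_whisker n _)
          _ = (L.map (adj.unit.app b) ≫ φ.app (L.obj b)) ≫
                G.map (L.map (adj.unit.app b) ≫ φ.app (L.obj b)) :=
              (whisker_eq _ (Category.assoc _ _ _)).trans ((Category.assoc _ _ _).symm.trans
                (whisker_eq _ (G.map_comp _ _).symm))
      }
  map f :=
    { f := L.map f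
      h := by
        have n := φ.1.naturality (L.map f)
        refine (Category.assoc _ _ _).trans ((whisker_eq _ n.symm).trans
          ((Category.assoc _ _ _).symm.trans ?_))
        change (L.map (adj.unit.app _) ≫ L.map (R.map (L.map f))) ≫ φ.app (L.obj _) = _
        erw [← L.map_comp, unit_nat adj f, L.map_comp, Category.assoc] }
  map_id b := by ext; simp
  map_comp f g := by ext; simp

lemma mkK_forget (φ : adj.toComonad ⟶ G) : mkK G adj φ ⋙ G.forget = L := rfl

lemma e (K : B ⥤ G.Coalgebra) (h : K ⋙ G.forget = L) (b : B) : (K.obj b).A = L.obj b :=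
  Functor.congr_obj h b

lemma Kmap_f (K : B ⥤ G.Coalgebra) (h : K ⋙ G.forget = L) {b b' : B} (f : b ⟶ b') :
    (K.map f).f = eqToHom (e G K h b) ≫ L.map f ≫ eqToHom (e G K h b').symm := by
  have := Functor.congr_hom h f
  simp at this
  exact this

set_option maxRecDepth 10000 in
set_option maxHeartbeats 1600000 in
/-- From a lift, a comonad morphism. -/
def toφ (K : B ⥤ G.Coalgebra) (h : K ⋙ G.forget = L) : adj.toComonad ⟶ G where
  app X := eqToHom (e G K h (R.obj X)).symm ≫ (K.obj (R.obj X)).a ≫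
      G.map (eqToHom (e G K h (R.obj X)) ≫ adj.counit.app X)
  naturality X Y f := by
    have hm := (K.map (R.map f)).h
    rw [Kmap_f G K h (R.map f)] at hm
    calc L.map (R.map f) ≫ eqToHom (e G K h (R.obj Y)).symm ≫ (K.obj (R.obj Y)).a ≫
          G.map (eqToHom (e G K h (R.obj Y)) ≫ adj.counit.app Y)
        = eqToHom (e G K h (R.obj X)).symm ≫ ((eqToHom (e G K h (R.obj X)) ≫ L.map (R.map f) ≫
            eqToHom (e G K h (R.obj Y)).symm) ≫ (K.obj (R.obj Y)).a) ≫
            G.map (eqToHom (e G K h (R.obj Y)) ≫ adj.counit.app Y) := by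
          simp only [Category.assoc, eqToHom_trans_assoc, eqToHom_refl, Category.id_comp]
      _ = eqToHom (e G K h (R.obj X)).symm ≫ ((K.obj (R.obj X)).a ≫
            G.map (eqToHom (e G K h (R.obj X)) ≫ L.map (R.map f) ≫
            eqToHom (e G K h (R.obj Y)).symm)) ≫
            G.map (eqToHom (e G K h (R.obj Y)) ≫ adj.counit.app Y) := by rw [← hm]
      _ = eqToHom (e G K h (R.obj X)).symm ≫ (K.obj (R.obj X)).a ≫
            G.map (eqToHom (e G K h (R.obj X)) ≫ L.map (R.map f) ≫ adj.counit.app Y) := by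
          simp only [Category.assoc, ← Functor.map_comp, eqToHom_trans_assoc, eqToHom_refl,
            Category.id_comp]
      _ = eqToHom (e G K h (R.obj X)).symm ≫ (K.obj (R.obj X)).a ≫
            G.map (eqToHom (e G K h (R.obj X)) ≫ adj.counit.app X ≫ f) := by
          have := adj.counit.naturality f
          dsimp at this
          rw [this]
      _ = (eqToHom (e G K h (R.obj X)).symm ≫ (K.obj (R.obj X)).a ≫
            G.map (eqToHom (e G K h (R.obj X)) ≫ adj.counit.app X)) ≫ G.map f := by
          simp
  app_ε X := by
    have n := G.ε.naturality (eqToHom (e G K h (R.obj X)) ≫ adj.counit.app X)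
    dsimp at n
    dsimp
    rw [Category.assoc, Category.assoc, n, (K.obj (R.obj X)).counit_assoc]
    simp
    erw [eqToHom_trans_assoc, eqToHom_refl, Category.id_comp]
  app_δ X := by
    have hm := (K.map (adj.unit.app (R.obj X))).h
    rw [Kmap_f G K h (adj.unit.app (R.obj X))] at hm
    have nδ := G.δ.naturality (eqToHom (e G K h (R.obj X)) ≫ adj.counit.app X)
    dsimp at nδ
    dsimp
    calc (eqToHom (e G K h (R.obj X)).symm ≫ (K.obj (R.obj X)).a ≫
          G.map (eqToHom (e G K h (R.obj X)) ≫ adj.counit.app X)) ≫ G.δ.app X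
        = eqToHom (e G K h (R.obj X)).symm ≫ (K.obj (R.obj X)).a ≫
            G.δ.app _ ≫ G.map (G.map (eqToHom (e G K h (R.obj X)) ≫ adj.counit.app X)) := by
          rw [Category.assoc, Category.assoc, nδ]
      _ = eqToHom (e G K h (R.obj X)).symm ≫ (K.obj (R.obj X)).a ≫
            G.map ((K.obj (R.obj X)).a ≫ G.map (eqToHom (e G K h (R.obj X)) ≫
              adj.counit.app X)) := by
          rw [(K.obj (R.obj X)).coassoc_assoc]; simp
      _ = L.map (adj.unit.app (R.obj X)) ≫ (eqToHom (e G K h (R.obj (L.obj (R.obj X)))).symm ≫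
            (K.obj (R.obj (L.obj (R.obj X)))).a ≫
            G.map (eqToHom (e G K h (R.obj (L.obj (R.obj X)))) ≫
              adj.counit.app (L.obj (R.obj X)))) ≫
            G.map (eqToHom (e G K h (R.obj X)).symm ≫ (K.obj (R.obj X)).a ≫
              G.map (eqToHom (e G K h (R.obj X)) ≫ adj.counit.app X)) := by
          simp only [Functor.id_obj, Functor.comp_obj] at hm
          symm
          calc L.map (adj.unit.app (R.obj X)) ≫ (eqToHom (e G K h (R.obj (L.obj (R.obj X)))).symm ≫
                (K.obj (R.obj (L.obj (R.obj X)))).a ≫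
                G.map (eqToHom (e G K h (R.obj (L.obj (R.obj X)))) ≫
                  adj.counit.app (L.obj (R.obj X)))) ≫
                G.map (eqToHom (e G K h (R.obj X)).symm ≫ (K.obj (R.obj X)).a ≫
                  G.map (eqToHom (e G K h (R.obj X)) ≫ adj.counit.app X))
              = eqToHom (e G K h (R.obj X)).symm ≫ eqToHom (e G K h (R.obj X)) ≫
                  L.map (adj.unit.app (R.obj X)) ≫
                  eqToHom (e G K h (R.obj (L.obj (R.obj X)))).symm ≫
                  (K.obj (R.obj (L.obj (R.obj X)))).a ≫
                  G.map (eqToHom (e G K h (R.obj (L.obj (R.obj X)))) ≫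
                    adj.counit.app (L.obj (R.obj X)) ≫
                    eqToHom (e G K h (R.obj X)).symm ≫ (K.obj (R.obj X)).a ≫
                    G.map (eqToHom (e G K h (R.obj X)) ≫ adj.counit.app X)) := by
                simp only [Category.assoc, eqToHom_trans_assoc, eqToHom_refl, Category.id_comp,
                  G.map_comp]
            _ = eqToHom (e G K h (R.obj X)).symm ≫ (K.obj (R.obj X)).a ≫
                  G.map (eqToHom (e G K h (R.obj X)) ≫ L.map (adj.unit.app (R.obj X)) ≫
                    eqToHom (e G K h (R.obj (L.obj (R.obj X)))).symm) ≫
                  G.map (eqToHom (e G K h (R.obj (L.obj (R.obj X)))) ≫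
                    adj.counit.app (L.obj (R.obj X)) ≫
                    eqToHom (e G K h (R.obj X)).symm ≫ (K.obj (R.obj X)).a ≫
                    G.map (eqToHom (e G K h (R.obj X)) ≫ adj.counit.app X)) := by
                rw [← reassoc_of% hm]
            _ = eqToHom (e G K h (R.obj X)).symm ≫ (K.obj (R.obj X)).a ≫
                  G.map ((K.obj (R.obj X)).a ≫
                    G.map (eqToHom (e G K h (R.obj X)) ≫ adj.counit.app X)) := by
                simp only [Category.assoc, ← G.map_comp, eqToHom_trans_assoc, eqToHom_refl,
                  Category.id_comp, Adjunction.left_triangle_components_assoc]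

lemma coalg_ext {X Y : G.Coalgebra} (hA : X.A = Y.A)
    (ha : X.a ≫ G.map (eqToHom hA) = eqToHom hA ≫ Y.a) : X = Y := by
  cases X; cases Y
  dsimp at hA
  subst hA
  simp only [eqToHom_refl, Category.comp_id, Category.id_comp, CategoryTheory.Functor.map_id] at ha
  subst ha
  rfl

lemma eqToHom_f {X Y : G.Coalgebra} (hh : X = Y) :
    (eqToHom hh).f = eqToHom (congrArg Comonad.Coalgebra.A hh) := by
  subst hh; rfl

set_option maxHeartbeats 1600000 in
lemma left_inv (K : B ⥤ G.Coalgebra) (h : K ⋙ G.forget = L) :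
    mkK G adj (toφ G adj K h) = K := by
  refine CategoryTheory.Functor.ext (fun b => ?_) (fun b b' f => ?_)
  · refine coalg_ext G (hA := (e G K h b).symm) ?_
    have hm := (K.map (adj.unit.app b)).h
    rw [Kmap_f G K h (adj.unit.app b)] at hm
    simp only [Functor.id_obj, Functor.comp_obj] at hm
    show (L.map (adj.unit.app b) ≫ (toφ G adj K h).app (L.obj b)) ≫
        G.map (eqToHom (e G K h b).symm) = eqToHom (e G K h b).symm ≫ (K.obj b).a
    show (L.map (adj.unit.app b) ≫ eqToHom (e G K h (R.obj (L.obj b))).symm ≫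
        (K.obj (R.obj (L.obj b))).a ≫ G.map (eqToHom (e G K h (R.obj (L.obj b))) ≫
          adj.counit.app (L.obj b))) ≫
        G.map (eqToHom (e G K h b).symm) = eqToHom (e G K h b).symm ≫ (K.obj b).a
    calc (L.map (adj.unit.app b) ≫ eqToHom (e G K h (R.obj (L.obj b))).symm ≫
          (K.obj (R.obj (L.obj b))).a ≫ G.map (eqToHom (e G K h (R.obj (L.obj b))) ≫
            adj.counit.app (L.obj b))) ≫ G.map (eqToHom (e G K h b).symm)
        = eqToHom (e G K h b).symm ≫ eqToHom (e G K h b) ≫ L.map (adj.unit.app b) ≫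
            eqToHom (e G K h (R.obj (L.obj b))).symm ≫
            (K.obj (R.obj (L.obj b))).a ≫ G.map (eqToHom (e G K h (R.obj (L.obj b))) ≫
              adj.counit.app (L.obj b) ≫ eqToHom (e G K h b).symm) := by
          simp only [Category.assoc, eqToHom_trans_assoc, eqToHom_refl, Category.id_comp,
            G.map_comp]
      _ = eqToHom (e G K h b).symm ≫ (K.obj b).a ≫
            G.map (eqToHom (e G K h b) ≫ L.map (adj.unit.app b) ≫
              eqToHom (e G K h (R.obj (L.obj b))).symm) ≫
            G.map (eqToHom (e G K h (R.obj (L.obj b))) ≫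
              adj.counit.app (L.obj b) ≫ eqToHom (e G K h b).symm) := by
          rw [← reassoc_of% hm]
      _ = eqToHom (e G K h b).symm ≫ (K.obj b).a := by
          simp only [Category.assoc, ← G.map_comp, eqToHom_trans_assoc, eqToHom_refl,
            Category.id_comp, Adjunction.left_triangle_components_assoc, eqToHom_trans]
          simp
  · apply Comonad.Coalgebra.Hom.ext
    rw [Comonad.Coalgebra.comp_f, Comonad.Coalgebra.comp_f, eqToHom_f, eqToHom_f,
      Kmap_f G K h f]
    show L.map f = _
    simp only [eqToHom_trans_assoc, Category.assoc, eqToHom_trans, eqToHom_refl,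
      Category.id_comp, Category.comp_id]
    erw [eqToHom_refl, eqToHom_refl, Category.id_comp, Category.comp_id]

lemma right_inv (φ : adj.toComonad ⟶ G) :
    toφ G adj (mkK G adj φ) (mkK_forget G adj φ) = φ := by
  apply ComonadHom.ext
  funext X
  have n := φ.1.naturality (adj.counit.app X)
  dsimp at n
  have : (toφ G adj (mkK G adj φ) (mkK_forget G adj φ)).app X =
      𝟙 _ ≫ (L.map (adj.unit.app (R.obj X)) ≫ φ.app (L.obj (R.obj X))) ≫
        G.map (𝟙 _ ≫ adj.counit.app X) := rfl
  erw [this, Category.id_comp, Category.id_comp, Category.assoc, ← n,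
    ← Functor.map_comp_assoc, adj.right_triangle_components]
  simp
  erw [Category.id_comp]

end Stmt5Aux

open Stmt5Aux in
/-- Dubuc: given a comonad `G` on `A` and a functor `L : B ⥤ A` with a right
adjoint `R`, there is a bijective correspondence between functors `K : B ⥤ A^G` with
`U ∘ K = L` (where `U` is the forgetful functor from `G`-coalgebras) and morphisms of
comonads `φ : LR ⟶ G` (where `LR` carries the comonad structure of the adjunction). -/
theorem stmt5 {A : Type*} {B : Type*} [Category A] [Category B]
    (G : Comonad A) (L : B ⥤ A) (R : A ⥤ B) (adj : L ⊣ R) :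
    Nonempty ({ K : B ⥤ G.Coalgebra // K ⋙ G.forget = L } ≃ (adj.toComonad ⟶ G)) :=
  ⟨{ toFun := fun Kh => toφ G adj Kh.1 Kh.2
     invFun := fun φ => ⟨mkK G adj φ, mkK_forget G adj φ⟩
     left_inv := fun Kh => Subtype.ext (left_inv G adj Kh.1 Kh.2)
     right_inv := fun φ => right_inv G adj φ }⟩
end

section
/- In the setting of the adjunction $K_\varphi \dashv D_\varphi$ (where $D_\varphi X$ is the equalizer $eq_X : D_\varphi X \to RX$ of $\alpha_X$ and $Rx$), the counit of the adjunction at a $G$-coalgebra $(X,x)$ is given by $\widehat{\epsilon}_X = \epsilon_X \circ L(eq_X) : LD_\varphi X \to X$, and this morphism is a homomorphism of $G$-coalgebras from $K_\varphi D_\varphi X$ to $(X,x)$. -/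
open CategoryTheory CategoryTheory.Limits

section Aux

variable {A : Type*} {B : Type*} [Category A] [Category B]
  (G : Comonad A) (L : B ⥤ A) (R : A ⥤ B) (adj : L ⊣ R)
  (φ : adj.toComonad ⟶ G)

lemma phi_nat {X Y : A} (f : X ⟶ Y) :
    L.map (R.map f) ≫ φ.app Y = φ.app X ≫ G.map f :=
  φ.toNatTrans.naturality f

lemma phi_eps (X : A) : φ.app X ≫ G.ε.app X = adj.counit.app X :=
  φ.app_ε X

lemma phi_delta (X : A) :
    φ.app X ≫ G.δ.app X =
      L.map (adj.unit.app (R.obj X)) ≫ φ.app (L.obj (R.obj X)) ≫ G.map (φ.app X) :=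
  φ.app_δ X

/-- The canonical comparison-type functor `K_φ`. -/
@[simps]
def Kc : B ⥤ G.Coalgebra where
  obj Y :=
    { A := L.obj Y
      a := L.map (adj.unit.app Y) ≫ φ.app (L.obj Y)
      counit := by
        erw [Category.assoc, phi_eps G L R adj φ, adj.left_triangle_components]
      coassoc := by
        erw [Category.assoc, phi_delta G L R adj φ]
        calc L.map (adj.unit.app Y) ≫
              L.map (adj.unit.app (R.obj (L.obj Y))) ≫ φ.app (L.obj (R.obj (L.obj Y))) ≫
                G.map (φ.app (L.obj Y))
            = L.map (adj.unit.app Y ≫ adj.unit.app (R.obj (L.obj Y))) ≫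
                φ.app (L.obj (R.obj (L.obj Y))) ≫ G.map (φ.app (L.obj Y)) := by
              rw [L.map_comp, Category.assoc]
          _ = L.map (adj.unit.app Y ≫ R.map (L.map (adj.unit.app Y))) ≫
                φ.app (L.obj (R.obj (L.obj Y))) ≫ G.map (φ.app (L.obj Y)) := by
              erw [← adj.unit_naturality]; try rfl
          _ = L.map (adj.unit.app Y) ≫
                (L.map (R.map (L.map (adj.unit.app Y))) ≫ φ.app (L.obj (R.obj (L.obj Y)))) ≫
                G.map (φ.app (L.obj Y)) := by
              simp only [L.map_comp, Category.assoc]; erw [Category.assoc]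
          _ = L.map (adj.unit.app Y) ≫
                (φ.app (L.obj Y) ≫ G.map (L.map (adj.unit.app Y))) ≫
                G.map (φ.app (L.obj Y)) := by
              exact congrArg (fun x => L.map (adj.unit.app Y) ≫ x ≫ G.map (φ.app (L.obj Y)))
                (phi_nat G L R adj φ (L.map (adj.unit.app Y)))
          _ = (L.map (adj.unit.app Y) ≫ φ.app (L.obj Y)) ≫
                G.map (L.map (adj.unit.app Y) ≫ φ.app (L.obj Y)) := by
              simp [G.map_comp]; erw [G.map_comp, Category.assoc, Category.assoc] }
  map {Y Z} f :=
    { f := L.map f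
      h := by
        dsimp
        calc (L.map (adj.unit.app Y) ≫ φ.app (L.obj Y)) ≫ G.map (L.map f)
            = L.map (adj.unit.app Y) ≫ L.map (R.map (L.map f)) ≫ φ.app (L.obj Z) := by
              erw [Category.assoc, phi_nat G L R adj φ]; rfl
          _ = L.map (adj.unit.app Y ≫ R.map (L.map f)) ≫ φ.app (L.obj Z) := by
              erw [L.map_comp, Category.assoc]
          _ = L.map (f ≫ adj.unit.app Z) ≫ φ.app (L.obj Z) := by
              erw [← adj.unit_naturality]
          _ = L.map f ≫ L.map (adj.unit.app Z) ≫ φ.app (L.obj Z) := by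
              erw [L.map_comp, Category.assoc] }
  map_id Y := by ext; simp
  map_comp f g := by ext; simp

variable [heqI : ∀ X : G.Coalgebra,
    HasEqualizer (adj.unit.app (R.obj X.A) ≫ R.map (φ.app X.A)) (R.map X.a)]

/-- naturality of `α`. -/
lemma alpha_nat {X Y : A} (f : X ⟶ Y) :
    R.map f ≫ (adj.unit.app (R.obj Y) ≫ R.map (φ.app Y)) =
      (adj.unit.app (R.obj X) ≫ R.map (φ.app X)) ≫ R.map (G.map f) := by
  calc R.map f ≫ adj.unit.app (R.obj Y) ≫ R.map (φ.app Y)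
      = (adj.unit.app (R.obj X) ≫ R.map (L.map (R.map f))) ≫ R.map (φ.app Y) := by
        erw [← Category.assoc, adj.unit_naturality]; try rfl
    _ = adj.unit.app (R.obj X) ≫ R.map (L.map (R.map f) ≫ φ.app Y) := by
        erw [R.map_comp, Category.assoc]
    _ = adj.unit.app (R.obj X) ≫ R.map (φ.app X ≫ G.map f) := by
        erw [phi_nat G L R adj φ]; rfl
    _ = (adj.unit.app (R.obj X) ≫ R.map (φ.app X)) ≫ R.map (G.map f) := by
        erw [R.map_comp, Category.assoc]

/-- the key transposition identity. -/
lemma transpose_comp_alpha (Y : B) (X : G.Coalgebra) (f : L.obj Y ⟶ X.A) :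
    (adj.homEquiv Y X.A f) ≫ (adj.unit.app (R.obj X.A) ≫ R.map (φ.app X.A)) =
      adj.homEquiv Y (G.obj X.A) ((L.map (adj.unit.app Y) ≫ φ.app (L.obj Y)) ≫ G.map f) := by
  rw [Adjunction.homEquiv_unit, Adjunction.homEquiv_unit]
  show (adj.unit.app Y ≫ R.map f) ≫ adj.unit.app (R.obj X.A) ≫ R.map (φ.app X.A) =
    adj.unit.app Y ≫ R.map ((L.map (adj.unit.app Y) ≫ φ.app (L.obj Y)) ≫ G.map f)
  rw [Category.assoc, alpha_nat G L R adj φ f]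
  calc adj.unit.app Y ≫ (adj.unit.app (R.obj (L.obj Y)) ≫ R.map (φ.app (L.obj Y))) ≫
          R.map (G.map f)
      = (adj.unit.app Y ≫ adj.unit.app (R.obj (L.obj Y))) ≫ R.map (φ.app (L.obj Y)) ≫
          R.map (G.map f) := by simp only [Category.assoc]
    _ = (adj.unit.app Y ≫ R.map (L.map (adj.unit.app Y))) ≫ R.map (φ.app (L.obj Y)) ≫
          R.map (G.map f) := by erw [← adj.unit_naturality]; try rfl
    _ = adj.unit.app Y ≫ R.map ((L.map (adj.unit.app Y) ≫ φ.app (L.obj Y)) ≫ G.map f) := by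
        simp only [R.map_comp, Category.assoc]; erw [R.map_comp, Category.assoc]

lemma fork_cond (Y : B) (X : G.Coalgebra) (f : (Kc G L R adj φ).obj Y ⟶ X) :
    (adj.homEquiv Y X.A f.f) ≫ (adj.unit.app (R.obj X.A) ≫ R.map (φ.app X.A)) =
      (adj.homEquiv Y X.A f.f) ≫ R.map X.a := by
  erw [transpose_comp_alpha, ← adj.homEquiv_naturality_right]
  exact congrArg _ f.h

/-- The right adjoint `D_φ`. -/
@[simps]
noncomputable def Dc : G.Coalgebra ⥤ B where
  obj X := equalizer (adj.unit.app (R.obj X.A) ≫ R.map (φ.app X.A)) (R.map X.a)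
  map {X X'} h :=
    equalizer.lift (equalizer.ι _ _ ≫ R.map h.f) (by
      calc (equalizer.ι _ (R.map X.a) ≫ R.map h.f) ≫
              (adj.unit.app (R.obj X'.A) ≫ R.map (φ.app X'.A))
          = equalizer.ι _ (R.map X.a) ≫
              (adj.unit.app (R.obj X.A) ≫ R.map (φ.app X.A)) ≫ R.map (G.map h.f) := by
            rw [Category.assoc, alpha_nat G L R adj φ h.f]
        _ = (equalizer.ι _ (R.map X.a) ≫ R.map X.a) ≫ R.map (G.map h.f) := by
            rw [← Category.assoc, equalizer.condition, Category.assoc]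
        _ = equalizer.ι _ (R.map X.a) ≫ R.map (X.a ≫ G.map h.f) := by
            rw [R.map_comp, Category.assoc]
        _ = equalizer.ι _ (R.map X.a) ≫ R.map (h.f ≫ X'.a) := by rw [h.h]
        _ = (equalizer.ι _ (R.map X.a) ≫ R.map h.f) ≫ R.map X'.a := by
            rw [R.map_comp, Category.assoc])
  map_id X := by
    apply equalizer.hom_ext
    simp
  map_comp {X X' X''} h h' := by
    apply equalizer.hom_ext
    simp

/-- The coalgebra-hom condition for untransposed maps. -/
lemma invFun_h (Y : B) (X : G.Coalgebra) (g : Y ⟶ (Dc G L R adj φ).obj X) :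
    (L.map (adj.unit.app Y) ≫ φ.app (L.obj Y)) ≫
        G.map ((adj.homEquiv Y X.A).symm (g ≫ equalizer.ι _ (R.map X.a))) =
      ((adj.homEquiv Y X.A).symm (g ≫ equalizer.ι _ (R.map X.a))) ≫ X.a := by
  apply (adj.homEquiv Y (G.obj X.A)).injective
  erw [← transpose_comp_alpha, adj.homEquiv_naturality_right ((adj.homEquiv Y X.A).symm _) X.a, Equiv.apply_symm_apply,
    Category.assoc, Category.assoc, equalizer.condition]; rfl

/-- The hom-set equivalence. -/
@[simps]
noncomputable def coreEquiv : Adjunction.CoreHomEquiv (Kc G L R adj φ) (Dc G L R adj φ) where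
  homEquiv Y X :=
    { toFun := fun f => equalizer.lift (adj.homEquiv Y X.A f.f) (fork_cond G L R adj φ Y X f)
      invFun := fun g =>
        { f := (adj.homEquiv Y X.A).symm (g ≫ equalizer.ι _ _)
          h := invFun_h G L R adj φ Y X g }
      left_inv := fun f => by
        ext
        simp; erw [equalizer.lift_ι, Equiv.symm_apply_apply]
      right_inv := fun g => by
        apply equalizer.hom_ext
        simp; rfl }
  homEquiv_naturality_left_symm := fun {Y' Y X} f g => by
    ext
    dsimp
    show (adj.homEquiv Y' X.A).symm ((f ≫ g) ≫ equalizer.ι _ (R.map X.a)) =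
      L.map f ≫ (adj.homEquiv Y X.A).symm (g ≫ equalizer.ι _ (R.map X.a))
    erw [Category.assoc, adj.homEquiv_naturality_left_symm]
  homEquiv_naturality_right := fun {Y X X'} f h => by
    apply equalizer.hom_ext
    dsimp
    erw [equalizer.lift_ι, Category.assoc, equalizer.lift_ι, ← Category.assoc, equalizer.lift_ι,
      adj.homEquiv_naturality_right]

/-- The adjunction `K_φ ⊣ D_φ`. -/
noncomputable def adjc : Kc G L R adj φ ⊣ Dc G L R adj φ :=
  Adjunction.mkOfHomEquiv (coreEquiv G L R adj φ)

lemma adjc_counit_f (X : G.Coalgebra) :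
    ((adjc G L R adj φ).counit.app X).f =
      L.map (equalizer.ι (adj.unit.app (R.obj X.A) ≫ R.map (φ.app X.A)) (R.map X.a)) ≫
        adj.counit.app X.A := by
  dsimp [adjc, coreEquiv]
  show (adj.homEquiv _ X.A).symm (𝟙 ((Dc G L R adj φ).obj X) ≫ equalizer.ι _ (R.map X.a)) = _
  erw [Category.id_comp]
  exact adj.homEquiv_counit (g := _)

/-- coalgebra extensionality. -/
lemma coalg_ext {X Y : G.Coalgebra} (h1 : X.A = Y.A) (h2 : HEq X.a Y.a) : X = Y := by
  cases X; cases Y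
  dsimp at h1
  subst h1
  dsimp at h2
  have h3 := eq_of_heq h2
  subst h3
  rfl

lemma coalg_hom_hext {X X' Y Y' : G.Coalgebra} (hX : X = X') (hY : Y = Y')
    (f : X ⟶ Y) (g : X' ⟶ Y') (h : HEq f.f g.f) : HEq f g := by
  subst hX; subst hY
  exact heq_of_eq (Comonad.Coalgebra.Hom.ext (eq_of_heq h))

end Aux

/-- in the setting of the adjunction `K_φ ⊣ D_φ`, where `D_φ X` is the equalizer
`eq_X : D_φ X ⟶ RX` of `α_X` and `Rx`, the counit of the adjunction at a `G`-coalgebra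
`(X, x)` is given by `ε̂_X = ϵ_X ∘ L(eq_X) : L(D_φ X) ⟶ X`, and this morphism is a
homomorphism of `G`-coalgebras from `K_φ D_φ X` (with coaction `β_{D_φ X}`) to `(X, x)`. -/
theorem stmt7 {A : Type*} {B : Type*} [Category A] [Category B]
    (G : Comonad A) (L : B ⥤ A) (R : A ⥤ B) (adj : L ⊣ R)
    (φ : adj.toComonad ⟶ G)
    (K : B ⥤ G.Coalgebra)
    (hK : K ⋙ G.forget = L)
    (hKa : ∀ Y : B, HEq (K.obj Y).a (L.map (adj.unit.app Y) ≫ φ.app (L.obj Y)))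
    (hKf : ∀ Y Z : B, ∀ f : Y ⟶ Z, HEq (K.map f).f (L.map f))
    (heq : ∀ X : G.Coalgebra,
      HasEqualizer (adj.unit.app (R.obj X.A) ≫ R.map (φ.app X.A)) (R.map X.a)) :
    (∃ (D : G.Coalgebra ⥤ B)
        (hobj : ∀ X : G.Coalgebra,
          D.obj X = equalizer (adj.unit.app (R.obj X.A) ≫ R.map (φ.app X.A)) (R.map X.a))
        (adj2 : K ⊣ D),
      ∀ X : G.Coalgebra,
        HEq (adj2.counit.app X).f
          (L.map (eqToHom (hobj X) ≫
              equalizer.ι (adj.unit.app (R.obj X.A) ≫ R.map (φ.app X.A)) (R.map X.a)) ≫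
            adj.counit.app X.A)) ∧
    (∀ X : G.Coalgebra,
      (L.map (adj.unit.app
            (equalizer (adj.unit.app (R.obj X.A) ≫ R.map (φ.app X.A)) (R.map X.a))) ≫
          φ.app (L.obj (equalizer (adj.unit.app (R.obj X.A) ≫ R.map (φ.app X.A))
            (R.map X.a)))) ≫
        G.map (L.map (equalizer.ι (adj.unit.app (R.obj X.A) ≫ R.map (φ.app X.A))
            (R.map X.a)) ≫ adj.counit.app X.A) =
      (L.map (equalizer.ι (adj.unit.app (R.obj X.A) ≫ R.map (φ.app X.A)) (R.map X.a)) ≫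
        adj.counit.app X.A) ≫ X.a) := by
  have hobjK : ∀ Y : B, K.obj Y = (Kc G L R adj φ).obj Y := by
    intro Y
    refine coalg_ext G ?_ ?_
    · exact congrArg (fun F => F.obj Y) hK
    · exact (hKa Y).trans (heq_of_eq rfl)
  have hKK : K = Kc G L R adj φ := by
    apply CategoryTheory.Functor.hext hobjK
    intro Y Z f
    exact coalg_hom_hext G (hobjK Y) (hobjK Z) _ _ ((hKf Y Z f).trans (heq_of_eq rfl))
  subst hKK
  constructor
  · refine ⟨Dc G L R adj φ, fun X => rfl, adjc G L R adj φ, fun X => heq_of_eq ?_⟩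
    rw [adjc_counit_f]
    simp; erw [eqToHom_refl, L.map_id, Category.id_comp]
  · intro X
    have h := ((adjc G L R adj φ).counit.app X).h
    rw [adjc_counit_f] at h
    exact h
end

section
/- Let $G$ be a comonad on $\mathcal{A}$, $L \dashv R$ an adjunction with $L : \mathcal{B} \to \mathcal{A}$, and $\varphi : LR \to G$ a morphism of comonads. Assume the equalizer of $(\alpha_X, Rx)$ exists in $\mathcal{B}$ for every $G$-coalgebra $(X,x)$, where $\alpha = R\varphi \circ \eta R$. Then the right adjoint $D_\varphi : \mathcal{A}^G \to \mathcal{B}$ of $K_\varphi$ is fully faithful if and only if $L$ preserves all equalizers of the form $D_\varphi X \to RX \rightrightarrows RGX$ and $\varphi$ is an isomorphism. -/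
open CategoryTheory CategoryTheory.Limits

namespace Stmt10Aux

variable {A : Type*} {B : Type*} [Category A] [Category B]
variable (G : Comonad A) {L : B ⥤ A} {R : A ⥤ B} (adj : L ⊣ R) (φ : adj.toComonad ⟶ G)

def phiA (Z : A) : L.obj (R.obj Z) ⟶ G.obj Z := φ.app Z

lemma phi_nat {X Y : A} (f : X ⟶ Y) :
    L.map (R.map f) ≫ phiA G adj φ Y = phiA G adj φ X ≫ G.map f := φ.1.naturality f

lemma phi_eps (Z : A) : phiA G adj φ Z ≫ G.ε.app Z = adj.counit.app Z := φ.app_ε Z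

lemma phi_delta (Z : A) : phiA G adj φ Z ≫ G.δ.app Z =
    L.map (adj.unit.app (R.obj Z)) ≫ phiA G adj φ (L.obj (R.obj Z)) ≫ G.map (phiA G adj φ Z) :=
  φ.app_δ Z

/-- The canonical lifting `K_φ : B ⥤ A^G`. -/
abbrev liftK : B ⥤ G.Coalgebra where
  obj Y :=
    { A := L.obj Y
      a := L.map (adj.unit.app Y) ≫ phiA G adj φ (L.obj Y)
      counit := by
        rw [Category.assoc, phi_eps G adj φ, adj.left_triangle_components]
      coassoc := by
        have h1 := phi_delta G adj φ (L.obj Y)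
        have h2 : phiA G adj φ (L.obj Y) ≫ G.map (L.map (adj.unit.app Y))
            = L.map (R.map (L.map (adj.unit.app Y))) ≫ phiA G adj φ (L.obj (R.obj (L.obj Y))) :=
          (φ.1.naturality (L.map (adj.unit.app Y))).symm
        have h3 : adj.unit.app Y ≫ adj.unit.app (R.obj (L.obj Y))
            = adj.unit.app Y ≫ R.map (L.map (adj.unit.app Y)) :=
          (adj.unit_naturality (adj.unit.app Y)).symm
        rw [Category.assoc, h1, G.map_comp]
        simp only [Category.assoc]
        rw [reassoc_of% h2]
        simp only [← Category.assoc, ← L.map_comp]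
        rw [h3] }
  map {Y Z} f :=
    { f := L.map f
      h := by
        dsimp only
        have h2 : phiA G adj φ (L.obj Y) ≫ G.map (L.map f)
            = L.map (R.map (L.map f)) ≫ phiA G adj φ (L.obj Z) := (φ.1.naturality (L.map f)).symm
        have h3 : adj.unit.app Y ≫ R.map (L.map f) = f ≫ adj.unit.app Z :=
          adj.unit_naturality f
        rw [Category.assoc, h2, ← Category.assoc, ← L.map_comp, h3, L.map_comp,
          Category.assoc] }
  map_id Y := by ext; simp
  map_comp f g := by ext; simp

lemma unit_nat' {T Y' : B} (t : T ⟶ Y') :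
    adj.unit.app T ≫ R.map (L.map t) = t ≫ adj.unit.app Y' :=
  adj.unit_naturality t

lemma transpose_phi (X : G.Coalgebra) {T : B} (t : T ⟶ R.obj X.A) :
    adj.unit.app T ≫ R.map (L.map t ≫ phiA G adj φ X.A)
      = t ≫ (adj.unit.app (R.obj X.A) ≫ R.map (phiA G adj φ X.A)) := by
  rw [R.map_comp, ← Category.assoc, unit_nat' adj t, Category.assoc]

lemma transpose_counit_a (X : G.Coalgebra) {T : B} (t : T ⟶ R.obj X.A) :
    adj.unit.app T ≫ R.map (L.map t ≫ adj.counit.app X.A ≫ X.a) = t ≫ R.map X.a := by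
  rw [R.map_comp, R.map_comp, ← Category.assoc, unit_nat' adj t, Category.assoc,
    ← Category.assoc (adj.unit.app (R.obj X.A)), adj.right_triangle_components]
  simp

lemma equalizes_iff (X : G.Coalgebra) {T : B} (t : T ⟶ R.obj X.A) :
    t ≫ (adj.unit.app (R.obj X.A) ≫ R.map (phiA G adj φ X.A)) = t ≫ R.map X.a ↔
      L.map t ≫ phiA G adj φ X.A = L.map t ≫ adj.counit.app X.A ≫ X.a := by
  constructor
  · intro h
    apply (adj.homEquiv T (G.obj X.A)).injective
    rw [adj.homEquiv_unit, adj.homEquiv_unit, transpose_phi, transpose_counit_a, h]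
  · intro h
    rw [← transpose_phi G adj φ X t, ← transpose_counit_a G adj X t, h]

/-- The coalgebra morphism `K T ⟶ X` associated to an equalizing map `t : T ⟶ RX`. -/
def homOfEqualizes (X : G.Coalgebra) {T : B} (t : T ⟶ R.obj X.A)
    (ht : t ≫ (adj.unit.app (R.obj X.A) ≫ R.map (phiA G adj φ X.A)) = t ≫ R.map X.a) :
    (liftK G adj φ).obj T ⟶ X where
  f := L.map t ≫ adj.counit.app X.A
  h := by
    show (L.map (adj.unit.app T) ≫ phiA G adj φ (L.obj T)) ≫ G.map (L.map t ≫ adj.counit.app X.A)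
      = (L.map t ≫ adj.counit.app X.A) ≫ X.a
    have h2 : phiA G adj φ (L.obj T) ≫ G.map (L.map t)
        = L.map (R.map (L.map t)) ≫ phiA G adj φ (L.obj (R.obj X.A)) :=
      (φ.1.naturality (L.map t)).symm
    have h4 : phiA G adj φ (L.obj (R.obj X.A)) ≫ G.map (adj.counit.app X.A)
        = L.map (R.map (adj.counit.app X.A)) ≫ phiA G adj φ X.A :=
      (φ.1.naturality (adj.counit.app X.A)).symm
    have h5 := (equalizes_iff G adj φ X t).1 ht
    rw [G.map_comp, Category.assoc, ← Category.assoc (phiA G adj φ (L.obj T)), h2, Category.assoc,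
      h4, ← Category.assoc, ← Category.assoc, ← L.map_comp, ← L.map_comp,
      unit_nat' adj t, Category.assoc, adj.right_triangle_components, Category.comp_id,
      h5, Category.assoc]

variable {D : G.Coalgebra ⥤ B}

/-- `û_X : D X ⟶ R X`. -/
def ubar (adj2 : liftK G adj φ ⊣ D) (X : G.Coalgebra) : D.obj X ⟶ R.obj X.A :=
  adj.unit.app (D.obj X) ≫ R.map ((adj2.counit.app X).f)

lemma ubar_def' (adj2 : liftK G adj φ ⊣ D) (X : G.Coalgebra) :
    ubar G adj φ adj2 X = adj.unit.app (D.obj X) ≫ R.map ((adj2.counit.app X).f) := rfl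

lemma L_ubar_counit (adj2 : liftK G adj φ ⊣ D) (X : G.Coalgebra) :
    L.map (ubar G adj φ adj2 X) ≫ adj.counit.app X.A = (adj2.counit.app X).f := by
  have h2 : L.map (R.map ((adj2.counit.app X).f)) ≫ adj.counit.app X.A
      = adj.counit.app (L.obj (D.obj X)) ≫ (adj2.counit.app X).f :=
    adj.counit_naturality _
  rw [ubar_def', L.map_comp, Category.assoc, h2, ← Category.assoc,
    adj.left_triangle_components, Category.id_comp]

lemma counit_f_a (adj2 : liftK G adj φ ⊣ D) (X : G.Coalgebra) :
    (adj2.counit.app X).f ≫ X.a = L.map (ubar G adj φ adj2 X) ≫ phiA G adj φ X.A := by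
  have h : (L.map (adj.unit.app (D.obj X)) ≫ phiA G adj φ (L.obj (D.obj X)))
        ≫ G.map ((adj2.counit.app X).f) = (adj2.counit.app X).f ≫ X.a :=
    (adj2.counit.app X).h
  have h2 : phiA G adj φ (L.obj (D.obj X)) ≫ G.map ((adj2.counit.app X).f)
      = L.map (R.map ((adj2.counit.app X).f)) ≫ phiA G adj φ X.A :=
    (φ.1.naturality ((adj2.counit.app X).f)).symm
  rw [← h, Category.assoc, h2, ← Category.assoc, ← L.map_comp, ubar_def']

lemma ubar_w (adj2 : liftK G adj φ ⊣ D) (X : G.Coalgebra) :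
    ubar G adj φ adj2 X ≫ (adj.unit.app (R.obj X.A) ≫ R.map (phiA G adj φ X.A))
      = ubar G adj φ adj2 X ≫ R.map X.a := by
  rw [equalizes_iff]
  conv_rhs => rw [← Category.assoc, L_ubar_counit G adj φ adj2 X]
  exact (counit_f_a G adj φ adj2 X).symm

lemma comp_ubar (adj2 : liftK G adj φ ⊣ D) (X : G.Coalgebra) {T : B} (g : T ⟶ D.obj X) :
    g ≫ ubar G adj φ adj2 X
      = adj.unit.app T ≫ R.map (((adj2.homEquiv T X).symm g).f) := by
  rw [adj2.homEquiv_counit]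
  show g ≫ ubar G adj φ adj2 X
    = adj.unit.app T ≫ R.map (L.map g ≫ (adj2.counit.app X).f)
  rw [R.map_comp, ← Category.assoc, unit_nat' adj g, ubar_def', Category.assoc]

/-- `û_X` is an equalizer fork. -/
def isLimitUbar (adj2 : liftK G adj φ ⊣ D) (X : G.Coalgebra) :
    IsLimit (Fork.ofι (ubar G adj φ adj2 X) (ubar_w G adj φ adj2 X)) := by
  refine Fork.IsLimit.mk _
    (fun s => (adj2.homEquiv s.pt X) (homOfEqualizes G adj φ X s.ι s.condition)) ?_ ?_
  · intro s
    rw [Fork.ι_ofι, comp_ubar, Equiv.symm_apply_apply]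
    show adj.unit.app s.pt ≫ R.map (L.map s.ι ≫ adj.counit.app X.A) = s.ι
    rw [R.map_comp, ← Category.assoc, unit_nat' adj (T := s.pt) (Y' := R.obj X.A) s.ι,
      Category.assoc, adj.right_triangle_components, Category.comp_id]
  · intro s m hm
    apply (adj2.homEquiv s.pt X).symm.injective
    apply Comonad.Coalgebra.Hom.ext'
    apply (adj.homEquiv s.pt X.A).injective
    rw [adj.homEquiv_unit, adj.homEquiv_unit, ← comp_ubar, Equiv.symm_apply_apply]
    show m ≫ ubar G adj φ adj2 X = adj.unit.app s.pt ≫ R.map (L.map s.ι ≫ adj.counit.app X.A)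
    rw [Fork.ι_ofι] at hm
    rw [hm, R.map_comp, ← Category.assoc, unit_nat' adj (T := s.pt) (Y' := R.obj X.A) s.ι,
      Category.assoc, adj.right_triangle_components, Category.comp_id]

lemma cofree_w (Z : A) :
    (adj.unit.app (R.obj Z) ≫ R.map (phiA G adj φ Z))
        ≫ (adj.unit.app (R.obj (G.obj Z)) ≫ R.map (phiA G adj φ (G.obj Z)))
      = (adj.unit.app (R.obj Z) ≫ R.map (phiA G adj φ Z)) ≫ R.map (G.δ.app Z) := by
  have hδ := phi_delta G adj φ Z
  have hn1 : R.map (phiA G adj φ Z) ≫ adj.unit.app (R.obj (G.obj Z))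
      = adj.unit.app (R.obj (L.obj (R.obj Z))) ≫ R.map (L.map (R.map (phiA G adj φ Z))) :=
    (unit_nat' adj (R.map (phiA G adj φ Z))).symm
  have hn2 : adj.unit.app (R.obj Z) ≫ adj.unit.app (R.obj (L.obj (R.obj Z)))
      = adj.unit.app (R.obj Z) ≫ R.map (L.map (adj.unit.app (R.obj Z))) :=
    (unit_nat' adj (adj.unit.app (R.obj Z))).symm
  have hn3 : L.map (R.map (phiA G adj φ Z)) ≫ phiA G adj φ (G.obj Z)
      = phiA G adj φ (L.obj (R.obj Z)) ≫ G.map (phiA G adj φ Z) := φ.1.naturality (phiA G adj φ Z)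
  rw [Category.assoc, Category.assoc, ← R.map_comp, hδ, R.map_comp, R.map_comp,
    ← Category.assoc (R.map (phiA G adj φ Z)), hn1, ← Category.assoc, ← Category.assoc, hn2]
  simp only [Category.assoc, ← R.map_comp]
  rw [hn3]

/-- For a cofree coalgebra, `α_Z : RZ ⟶ RGZ` is an equalizer fork (split equalizer). -/
def isLimitCofree (Z : A) :
    IsLimit (Fork.ofι (adj.unit.app (R.obj Z) ≫ R.map (phiA G adj φ Z)) (cofree_w G adj φ Z)) := by
  refine Fork.IsLimit.mk _ (fun s => s.ι ≫ R.map (G.ε.app Z)) ?_ ?_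
  · intro s
    have hn : R.map (G.ε.app Z) ≫ adj.unit.app (R.obj Z)
        = adj.unit.app (R.obj (G.obj Z)) ≫ R.map (L.map (R.map (G.ε.app Z))) :=
      (unit_nat' adj (R.map (G.ε.app Z))).symm
    have hn2 : L.map (R.map (G.ε.app Z)) ≫ phiA G adj φ Z
        = phiA G adj φ (G.obj Z) ≫ G.map (G.ε.app Z) := φ.1.naturality (G.ε.app Z)
    have hc := s.condition
    show (s.ι ≫ R.map (G.ε.app Z)) ≫ (adj.unit.app (R.obj Z) ≫ R.map (phiA G adj φ Z)) = s.ι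
    calc (s.ι ≫ R.map (G.ε.app Z)) ≫ (adj.unit.app (R.obj Z) ≫ R.map (phiA G adj φ Z))
        = s.ι ≫ (R.map (G.ε.app Z) ≫ adj.unit.app (R.obj Z)) ≫ R.map (phiA G adj φ Z) := by
          simp only [Category.assoc]
      _ = s.ι ≫ (adj.unit.app (R.obj (G.obj Z)) ≫ R.map (L.map (R.map (G.ε.app Z))))
            ≫ R.map (phiA G adj φ Z) := by rw [hn]
      _ = s.ι ≫ adj.unit.app (R.obj (G.obj Z))
            ≫ R.map (L.map (R.map (G.ε.app Z)) ≫ phiA G adj φ Z) := by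
          simp only [R.map_comp, Category.assoc]
      _ = s.ι ≫ adj.unit.app (R.obj (G.obj Z))
            ≫ R.map (phiA G adj φ (G.obj Z) ≫ G.map (G.ε.app Z)) := by rw [hn2]
      _ = (s.ι ≫ adj.unit.app (R.obj (G.obj Z)) ≫ R.map (phiA G adj φ (G.obj Z)))
            ≫ R.map (G.map (G.ε.app Z)) := by simp only [R.map_comp, Category.assoc]
      _ = (s.ι ≫ R.map (G.δ.app Z)) ≫ R.map (G.map (G.ε.app Z)) := by rw [hc]
      _ = s.ι ≫ R.map (G.δ.app Z ≫ G.map (G.ε.app Z)) := by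
          simp only [R.map_comp, Category.assoc]
      _ = s.ι := by rw [G.right_counit]; simp
  · intro s m hm
    simp only [Fork.ι_ofι] at hm
    show m = s.ι ≫ R.map (G.ε.app Z)
    rw [← hm, Category.assoc, Category.assoc, ← R.map_comp, phi_eps G adj φ Z,
      adj.right_triangle_components]
    simp

/-- When `φ_X` is invertible, `X.a ≫ φ⁻¹ : X ⟶ LRX` is an equalizer fork for the image pair. -/
lemma split_w (X : G.Coalgebra) [IsIso (phiA G adj φ X.A)] [IsIso (phiA G adj φ (G.obj X.A))] :
    (X.a ≫ inv (phiA G adj φ X.A)) ≫ L.map (adj.unit.app (R.obj X.A) ≫ R.map (phiA G adj φ X.A))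
      = (X.a ≫ inv (phiA G adj φ X.A)) ≫ L.map (R.map X.a) := by
  rw [← cancel_mono (phiA G adj φ (G.obj X.A))]
  have h1 : L.map (adj.unit.app (R.obj X.A) ≫ R.map (phiA G adj φ X.A)) ≫ phiA G adj φ (G.obj X.A)
      = phiA G adj φ X.A ≫ G.δ.app X.A := by
    have hn3 : L.map (R.map (phiA G adj φ X.A)) ≫ phiA G adj φ (G.obj X.A)
        = phiA G adj φ (L.obj (R.obj X.A)) ≫ G.map (phiA G adj φ X.A) := φ.1.naturality (phiA G adj φ X.A)
    rw [phi_delta G adj φ X.A, L.map_comp, Category.assoc, hn3]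
  simp only [Category.assoc]
  rw [h1, phi_nat G adj φ X.a, ← Category.assoc (inv (phiA G adj φ X.A)), IsIso.inv_hom_id,
    Category.id_comp, ← Category.assoc (inv (phiA G adj φ X.A)), IsIso.inv_hom_id,
    Category.id_comp, X.coassoc]

noncomputable def isLimitSplitFork (X : G.Coalgebra) [IsIso (phiA G adj φ X.A)] [IsIso (phiA G adj φ (G.obj X.A))] :
    IsLimit (Fork.ofι (X.a ≫ inv (phiA G adj φ X.A)) (split_w G adj φ X)) := by
  refine Fork.IsLimit.mk _ (fun s => s.ι ≫ adj.counit.app X.A) ?_ ?_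
  · intro s
    have hc := s.condition
    have hε : L.map (R.map X.a) ≫ adj.counit.app (G.obj X.A)
        = adj.counit.app X.A ≫ X.a := adj.counit_naturality X.a
    have hε2 : L.map (R.map (phiA G adj φ X.A)) ≫ adj.counit.app (G.obj X.A)
        = adj.counit.app (L.obj (R.obj X.A)) ≫ phiA G adj φ X.A := adj.counit_naturality _
    have key : (s.ι ≫ adj.counit.app X.A) ≫ X.a = s.ι ≫ phiA G adj φ X.A := by
      calc (s.ι ≫ adj.counit.app X.A) ≫ X.a
          = s.ι ≫ L.map (R.map X.a) ≫ adj.counit.app (G.obj X.A) := by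
            rw [hε]; simp only [Category.assoc]
        _ = (s.ι ≫ L.map (R.map X.a)) ≫ adj.counit.app (G.obj X.A) := by
            simp only [Category.assoc]
        _ = (s.ι ≫ L.map (adj.unit.app (R.obj X.A) ≫ R.map (phiA G adj φ X.A)))
              ≫ adj.counit.app (G.obj X.A) := by rw [← hc]
        _ = s.ι ≫ L.map (adj.unit.app (R.obj X.A))
              ≫ L.map (R.map (phiA G adj φ X.A)) ≫ adj.counit.app (G.obj X.A) := by
            simp only [L.map_comp, Category.assoc]
        _ = s.ι ≫ L.map (adj.unit.app (R.obj X.A))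
              ≫ adj.counit.app (L.obj (R.obj X.A)) ≫ phiA G adj φ X.A := by rw [hε2]
        _ = s.ι ≫ phiA G adj φ X.A := by
            erw [← Category.assoc (L.map (adj.unit.app (R.obj X.A))),
              adj.left_triangle_components]
            simp
    show (s.ι ≫ adj.counit.app X.A) ≫ (X.a ≫ inv (phiA G adj φ X.A)) = s.ι
    rw [← Category.assoc, key, Category.assoc, IsIso.hom_inv_id, Category.comp_id]
  · intro s m hm
    simp only [Fork.ι_ofι] at hm
    have h5 : inv (phiA G adj φ X.A) ≫ adj.counit.app X.A = G.ε.app X.A := by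
      rw [← phi_eps G adj φ X.A, IsIso.inv_hom_id_assoc]
    show m = s.ι ≫ adj.counit.app X.A
    rw [← hm, Category.assoc, Category.assoc, h5, X.counit]
    simp

end Stmt10Aux

open Stmt10Aux

/-- Theorem "Descent": in the setting of the lifted functor `K_φ` and its right
adjoint `D_φ` (given on a `G`-coalgebra `(X, x)` by the equalizer of `(α_X, Rx)`, assumed to
exist), the right adjoint `D_φ` is fully faithful if and only if `L` preserves all the
equalizers of the form `D_φ X ⟶ RX ⇉ RGX` and `φ` is an isomorphism of comonads. -/
theorem stmt10 {A : Type*} {B : Type*} [Category A] [Category B]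
    (G : Comonad A) (L : B ⥤ A) (R : A ⥤ B) (adj : L ⊣ R)
    (φ : adj.toComonad ⟶ G)
    (K : B ⥤ G.Coalgebra)
    (hK : K ⋙ G.forget = L)
    (hKa : ∀ Y : B, HEq (K.obj Y).a (L.map (adj.unit.app Y) ≫ φ.app (L.obj Y)))
    (hKf : ∀ Y Z : B, ∀ f : Y ⟶ Z, HEq (K.map f).f (L.map f))
    (heq : ∀ X : G.Coalgebra,
      HasEqualizer (adj.unit.app (R.obj X.A) ≫ R.map (φ.app X.A)) (R.map X.a))
    (D : G.Coalgebra ⥤ B)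
    (hobj : ∀ X : G.Coalgebra,
      D.obj X = equalizer (adj.unit.app (R.obj X.A) ≫ R.map (φ.app X.A)) (R.map X.a))
    (adj2 : K ⊣ D) :
    (D.Full ∧ D.Faithful) ↔
      ((∀ X : G.Coalgebra,
          Nonempty (PreservesLimit
            (parallelPair (adj.unit.app (R.obj X.A) ≫ R.map (φ.app X.A)) (R.map X.a)) L)) ∧
        IsIso φ) := by
  -- First, identify `K` with the canonical lift.
  have coalg_ext : ∀ (P Q : G.Coalgebra), P.A = Q.A → HEq P.a Q.a → P = Q := by
    rintro ⟨PA, Pa, _, _⟩ ⟨QA, Qa, _, _⟩ h1 h2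
    subst h1; cases h2; rfl
  have hKeq : K = liftK G adj φ := by
    refine CategoryTheory.Functor.ext (fun Y => ?_) (fun Y Z f => ?_)
    · exact coalg_ext _ _ (Functor.congr_obj hK Y) (hKa Y)
    · apply Comonad.Coalgebra.Hom.ext
      have hf := Functor.congr_hom hK f
      have heqf : ∀ {P Q : G.Coalgebra} (h : P = Q),
          (eqToHom h).f = eqToHom (congrArg Comonad.Coalgebra.A h) := by
        rintro P Q rfl; simp
      rw [Comonad.Coalgebra.comp_f, Comonad.Coalgebra.comp_f, heqf, heqf]
      exact hf
  subst hKeq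
  constructor
  · rintro ⟨hFull, hFaith⟩
    haveI := hFull; haveI := hFaith
    haveI : IsIso adj2.counit := adj2.counit_isIso_of_R_fully_faithful
    -- φ is a pointwise isomorphism
    have hφapp : ∀ Z : A, IsIso (phiA G adj φ Z) := by
      intro Z
      have hIso : IsIso ((adj2.counit.app (G.cofree.obj Z)).f) := by
        have : IsIso (G.forget.map (adj2.counit.app (G.cofree.obj Z))) := inferInstance
        exact this
      let i : D.obj (G.cofree.obj Z) ≅ R.obj Z :=
        (isLimitUbar G adj φ adj2 (G.cofree.obj Z)).conePointUniqueUpToIso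
          (isLimitCofree G adj φ Z)
      have hi : i.hom ≫ (adj.unit.app (R.obj Z) ≫ R.map (phiA G adj φ Z))
          = ubar G adj φ adj2 (G.cofree.obj Z) :=
        (isLimitUbar G adj φ adj2 (G.cofree.obj Z)).conePointUniqueUpToIso_hom_comp
          (isLimitCofree G adj φ Z) WalkingParallelPair.zero
      have hi2 : i.inv ≫ ubar G adj φ adj2 (G.cofree.obj Z)
          = adj.unit.app (R.obj Z) ≫ R.map (phiA G adj φ Z) := by
        erw [← hi, Iso.inv_hom_id_assoc]
      have hε2 : L.map (R.map (phiA G adj φ Z)) ≫ adj.counit.app (G.obj Z)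
          = adj.counit.app (L.obj (R.obj Z)) ≫ phiA G adj φ Z := adj.counit_naturality _
      have hL : L.map (ubar G adj φ adj2 (G.cofree.obj Z)) ≫ adj.counit.app (G.obj Z)
          = (adj2.counit.app (G.cofree.obj Z)).f :=
        L_ubar_counit G adj φ adj2 (G.cofree.obj Z)
      have hφZ : phiA G adj φ Z = L.map i.inv ≫ (adj2.counit.app (G.cofree.obj Z)).f := by
        calc phiA G adj φ Z
            = L.map (adj.unit.app (R.obj Z)) ≫ adj.counit.app (L.obj (R.obj Z))
                ≫ phiA G adj φ Z := by
              erw [← Category.assoc, adj.left_triangle_components]; simp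
          _ = L.map (adj.unit.app (R.obj Z)) ≫ L.map (R.map (phiA G adj φ Z))
                ≫ adj.counit.app (G.obj Z) := by rw [hε2]
          _ = L.map (adj.unit.app (R.obj Z) ≫ R.map (phiA G adj φ Z))
                ≫ adj.counit.app (G.obj Z) := by
              rw [L.map_comp]; simp only [Category.assoc]
          _ = L.map (i.inv ≫ ubar G adj φ adj2 (G.cofree.obj Z))
                ≫ adj.counit.app (G.obj Z) := by rw [hi2]; rfl
          _ = L.map i.inv ≫ L.map (ubar G adj φ adj2 (G.cofree.obj Z))
                ≫ adj.counit.app (G.obj Z) := by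
              rw [L.map_comp]; exact Category.assoc _ _ _
          _ = _ := congrArg (L.map i.inv ≫ ·) hL
      rw [hφZ]
      exact IsIso.comp_isIso' inferInstance hIso
    constructor
    · intro X
      haveI := hφapp X.A
      haveI := hφapp (G.obj X.A)
      haveI : IsIso ((adj2.counit.app X).f) := by
        have : IsIso (G.forget.map (adj2.counit.app X)) := inferInstance
        exact this
      refine ⟨preservesLimit_of_preserves_limit_cone (isLimitUbar G adj φ adj2 X)
        ((isLimitMapConeForkEquiv L (ubar_w G adj φ adj2 X)).symm ?_)⟩
      refine IsLimit.ofIsoLimit (isLimitSplitFork G adj φ X)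
        (Fork.ext (asIso ((adj2.counit.app X).f)).symm ?_)
      simp only [Fork.ι_ofι]
      show inv ((adj2.counit.app X).f) ≫ L.map (ubar G adj φ adj2 X) = X.a ≫ inv (phiA G adj φ X.A)
      rw [IsIso.inv_comp_eq, ← Category.assoc, counit_f_a G adj φ adj2 X]
      simp [Category.assoc]
    · -- `φ` is an isomorphism of comonads
      let e : ((adj.toComonad : A ⥤ A)) ≅ (G : A ⥤ A) :=
        NatIso.ofComponents (fun Z => @asIso _ _ _ _ (phiA G adj φ Z) (hφapp Z))
          (fun f => φ.1.naturality f)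
      have hcm : φ = (ComonadIso.mk e (fun Z => φ.app_ε Z) (fun Z => φ.app_δ Z)).hom := by
        apply ComonadHom.ext'
        rfl
      rw [hcm]
      infer_instance
  · rintro ⟨hP, hφ⟩
    have hφapp : ∀ Z : A, IsIso (phiA G adj φ Z) := by
      intro Z
      refine ⟨(inv φ).app Z, ?_, ?_⟩
      · exact congrArg (fun ψ => ψ.app Z) (IsIso.hom_inv_id φ)
      · exact congrArg (fun ψ => ψ.app Z) (IsIso.inv_hom_id φ)
    have hcounit : ∀ X : G.Coalgebra, IsIso (adj2.counit.app X) := by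
      intro X
      haveI : PreservesLimit (parallelPair (adj.unit.app (R.obj X.A) ≫ R.map (phiA G adj φ X.A))
        (R.map X.a)) L := (hP X).some
      haveI := hφapp X.A
      haveI := hφapp (G.obj X.A)
      have hL1 := isLimitForkMapOfIsLimit L (ubar_w G adj φ adj2 X) (isLimitUbar G adj φ adj2 X)
      have hL2 := isLimitSplitFork G adj φ X
      have hcp : (hL1.conePointUniqueUpToIso hL2).hom ≫ (X.a ≫ inv (phiA G adj φ X.A))
          = L.map (ubar G adj φ adj2 X) :=
        hL1.conePointUniqueUpToIso_hom_comp hL2 WalkingParallelPair.zero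
      have hu : (adj2.counit.app X).f = (hL1.conePointUniqueUpToIso hL2).hom := by
        apply Fork.IsLimit.hom_ext hL2
        simp only [Fork.ι_ofι]
        rw [hcp]
        show (adj2.counit.app X).f ≫ (X.a ≫ inv (phiA G adj φ X.A)) = L.map (ubar G adj φ adj2 X)
        rw [← Category.assoc, counit_f_a G adj φ adj2 X, Category.assoc, IsIso.hom_inv_id,
          Category.comp_id]
      haveI : IsIso ((adj2.counit.app X).f) := by rw [hu]; exact (hL1.conePointUniqueUpToIso hL2).isIso_hom
      exact Comonad.coalgebra_iso_of_iso G (adj2.counit.app X)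
    haveI : IsIso adj2.counit := NatIso.isIso_of_isIso_app _
    have ff := adj2.fullyFaithfulROfIsIsoCounit
    exact ⟨ff.full, ff.faithful⟩
end
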